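/- Let κ be a regular uncountable cardinal, let D ⊆ Sacks(κ) be a nonempty directed set with |D| < κ, and let s ∈ ⋂D. Then there is a function f : κ → 2 extending s (i.e. s = f↾dom(s)) such that f is a cofinal branch through every member of D: f↾α ∈ T for every α < κ and every T ∈ D. -/

import Mathlib

/-!
STATEMENT 7: If `T ∈ Sacks(κ)` and `f` is a cofinal branch through `T`, then the set of
`α < κ` such that `f↾α` splits in `T` is closed and unbounded in `κ`.
-/

universe u

namespace Stmt9

/-- A node of the tree `2^{<κ}`: a function `s : β → 2` for some ordinal `β`. -/
abbrev BNode : Type (u + 1) :=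
  (β : Ordinal.{u}) × ({γ : Ordinal.{u} // γ < β} → Bool)

/-- The restriction `s↾α` of a node `s` to some `α ≤ dom s`. -/
def nrestrict (s : BNode.{u}) (α : Ordinal.{u}) (h : α ≤ s.1) : BNode.{u} :=
  ⟨α, fun γ => s.2 ⟨γ.1, lt_of_lt_of_le γ.2 h⟩⟩

/-- The one-step extension `s⌢b` of a node `s`. -/
noncomputable def extOne (s : BNode.{u}) (b : Bool) : BNode.{u} :=
  ⟨s.1 + 1, fun γ => if h : γ.1 < s.1 then s.2 ⟨γ.1, h⟩ else b⟩

/-- `s` splits in `T`: both one-step extensions of `s` lie in `T`. -/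
def Splits (T : Set BNode.{u}) (s : BNode.{u}) : Prop :=
  extOne s false ∈ T ∧ extOne s true ∈ T

/-- `T` is a subtree of `2^{<κ}`: nonempty, consisting of nodes of length `< κ`,
and closed under restrictions. -/
def IsSubtree (κ : Cardinal.{u}) (T : Set BNode.{u}) : Prop :=
  T.Nonempty ∧ (∀ s ∈ T, s.1 < κ.ord) ∧
  ∀ s ∈ T, ∀ α : Ordinal.{u}, ∀ h : α ≤ s.1, nrestrict s α h ∈ T

/-- `T` is a condition of Kanamori's forcing `Sacks(κ)`. -/
def IsSacks (κ : Cardinal.{u}) (T : Set BNode.{u}) : Prop :=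
  IsSubtree κ T ∧
  (∀ s : BNode.{u}, s.1 < κ.ord → Order.IsSuccLimit s.1 →
    (∀ β : Ordinal.{u}, ∀ h : β < s.1, nrestrict s β h.le ∈ T) → s ∈ T) ∧
  (∀ s ∈ T, ∃ t ∈ T, ∃ h : s.1 ≤ t.1, nrestrict t s.1 h = s ∧ Splits T t) ∧
  (∀ s ∈ T, Order.IsSuccLimit s.1 →
    (∀ β : Ordinal.{u}, β < s.1 → ∃ γ : Ordinal.{u}, β ≤ γ ∧ ∃ h : γ < s.1,
      Splits T (nrestrict s γ h.le)) →
    Splits T s)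

/-- The restriction `f↾α` of a branch `f : κ → 2` to an ordinal `α ≤ κ`. -/
def brestrict (κ : Cardinal.{u}) (f : {γ : Ordinal.{u} // γ < κ.ord} → Bool)
    (α : Ordinal.{u}) (h : α ≤ κ.ord) : BNode.{u} :=
  ⟨α, fun γ => f ⟨γ.1, lt_of_lt_of_le γ.2 h⟩⟩

/-- Equal-length nodes with pointwise equal values are equal. -/
theorem bnode_ext {α : Ordinal.{u}} (f g : {γ : Ordinal.{u} // γ < α} → Bool)
    (h : ∀ γ, f γ = g γ) : (⟨α, f⟩ : BNode.{u}) = ⟨α, g⟩ := by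
  rw [funext h]

theorem lt_add_one_le {α β : Ordinal.{u}} (h : α < β + 1) : α ≤ β := by
  rw [Ordinal.add_one_eq_succ] at h; exact Order.lt_succ_iff.mp h

/-- Step lemma: a node lying in all members of a directed family of Sacks conditions
has a one-step extension lying in all members. -/
theorem exists_step (κ : Cardinal.{u}) (D : Set (Set BNode.{u}))
    (hD : ∀ T ∈ D, IsSacks κ T)
    (hdir : ∀ T₁ ∈ D, ∀ T₂ ∈ D, ∃ T ∈ D, T ⊆ T₁ ∧ T ⊆ T₂)
    (t : BNode.{u}) (ht : ∀ T ∈ D, t ∈ T) :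
    ∃ b, ∀ T ∈ D, extOne t b ∈ T := by
  obtain ⟨t1, t2⟩ := t
  by_contra hcon
  push_neg at hcon
  obtain ⟨T₀, hT₀D, hT₀⟩ := hcon false
  obtain ⟨T₁, hT₁D, hT₁⟩ := hcon true
  obtain ⟨T, hTD, hsub₀, hsub₁⟩ := hdir T₀ hT₀D T₁ hT₁D
  obtain ⟨u, huT, hle, hres, hsp⟩ := (hD T hTD).2.2.1 ⟨t1, t2⟩ (ht T hTD)
  have hspall : ∀ b : Bool, extOne u b ∈ T := by
    intro b; cases b; exacts [hsp.1, hsp.2]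
  rcases eq_or_lt_of_le hle with heq | hlt
  · -- here `u = ⟨t1, t2⟩`, so the node itself splits in `T`
    have hut : u = ⟨t1, t2⟩ := by
      rw [← hres]
      obtain ⟨u1, u2⟩ := u
      dsimp at heq
      subst heq
      rfl
    rw [hut] at hspall
    exact hT₀ (hsub₀ (hspall false))
  · -- here the node is a proper restriction of `u`
    have h2 : (fun γ : {γ : Ordinal.{u} // γ < t1} =>
        u.2 ⟨γ.1, lt_of_lt_of_le γ.2 hle⟩) = t2 := by
      have hres' := hres
      unfold nrestrict at hres'
      injection hres' with h2a h2b
    have h1 : t1 + 1 ≤ (extOne u (u.2 ⟨t1, hlt⟩)).1 := by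
      show t1 + 1 ≤ u.1 + 1
      exact add_le_add_left hlt.le 1
    have hkey : nrestrict (extOne u (u.2 ⟨t1, hlt⟩)) (t1 + 1) h1
        = extOne ⟨t1, t2⟩ (u.2 ⟨t1, hlt⟩) := by
      refine bnode_ext _ _ fun γ => ?_
      show (if h : γ.1 < u.1 then u.2 ⟨γ.1, h⟩ else u.2 ⟨t1, hlt⟩)
          = (if h : γ.1 < t1 then t2 ⟨γ.1, h⟩ else u.2 ⟨t1, hlt⟩)
      by_cases hγ : γ.1 < t1
      · rw [dif_pos hγ, dif_pos (hγ.trans hlt)]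
        exact congrFun h2 ⟨γ.1, hγ⟩
      · rw [dif_neg hγ]
        have hγe : γ.1 = t1 := le_antisymm (lt_add_one_le γ.2) (not_lt.1 hγ)
        rcases lt_or_ge γ.1 u.1 with h' | h'
        · rw [dif_pos h']
          have hse : (⟨γ.1, h'⟩ : {x : Ordinal.{u} // x < u.1}) = ⟨t1, hlt⟩ :=
            Subtype.ext hγe
          rw [hse]
        · exfalso
          rw [hγe] at h'
          exact absurd hlt (not_lt.2 h')
    have hfin : extOne ⟨t1, t2⟩ (u.2 ⟨t1, hlt⟩) ∈ T := by
      rw [← hkey]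
      exact (hD T hTD).1.2.2 _ (hspall _) _ h1
    cases hbv : u.2 ⟨t1, hlt⟩
    · rw [hbv] at hfin; exact hT₀ (hsub₀ hfin)
    · rw [hbv] at hfin; exact hT₁ (hsub₁ hfin)

/-- The branch, defined by transfinite recursion: follow `s`, then at each later
step pick (via choice) a bit keeping the node inside every member of `D`. -/
noncomputable def gfun (D : Set (Set BNode.{u})) (s : BNode.{u}) : Ordinal.{u} → Bool :=
  WellFounded.fix Ordinal.lt_wf fun γ ih =>
    if h : γ < s.1 then s.2 ⟨γ, h⟩
    else Classical.epsilon fun b =>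
      ∀ T ∈ D, extOne ⟨γ, fun δ => ih δ.1 δ.2⟩ b ∈ T

theorem gfun_eq (D : Set (Set BNode.{u})) (s : BNode.{u}) (γ : Ordinal.{u}) :
    gfun D s γ =
      if h : γ < s.1 then s.2 ⟨γ, h⟩
      else Classical.epsilon fun b =>
        ∀ T ∈ D, extOne ⟨γ, fun δ => gfun D s δ.1⟩ b ∈ T := by
  rw [gfun, WellFounded.fix_eq]

/-- Let `κ` be regular uncountable, `D ⊆ Sacks(κ)` nonempty and
directed with `|D| < κ`, and `s ∈ ⋂D`.  Then there is `f : κ → 2` extending `s`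
(i.e. agreeing with `s` on `dom s`) which is a cofinal branch through every member of
`D`: `f↾α ∈ T` for every `α < κ` and every `T ∈ D`. -/
theorem branch_through_directed_family (κ : Cardinal.{u}) (hreg : κ.IsRegular)
    (hunc : Cardinal.aleph0 < κ)
    (D : Set (Set BNode.{u})) (hne : D.Nonempty)
    (hD : ∀ T ∈ D, IsSacks κ T)
    (hdir : ∀ T₁ ∈ D, ∀ T₂ ∈ D, ∃ T ∈ D, T ⊆ T₁ ∧ T ⊆ T₂)
    (hcard : Cardinal.mk D < Cardinal.lift.{u + 1} κ)
    (s : BNode.{u}) (hs : s ∈ ⋂₀ D) :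
    ∃ f : {γ : Ordinal.{u} // γ < κ.ord} → Bool,
      (∀ γ : Ordinal.{u}, ∀ h1 : γ < s.1, ∀ h2 : γ < κ.ord, f ⟨γ, h2⟩ = s.2 ⟨γ, h1⟩) ∧
      (∀ α : Ordinal.{u}, ∀ h : α < κ.ord, ∀ T ∈ D, brestrict κ f α h.le ∈ T) := by
  refine ⟨fun γ => gfun D s γ.1, ?_, ?_⟩
  · intro γ h1 h2
    show gfun D s γ = s.2 ⟨γ, h1⟩
    rw [gfun_eq, dif_pos h1]
  · intro α
    induction α using Ordinal.induction with
    | h α IH =>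
      intro h T hT
      by_cases hα : α ≤ s.1
      · have heq : brestrict κ (fun γ => gfun D s γ.1) α h.le = nrestrict s α hα := by
          refine bnode_ext _ _ fun γ => ?_
          show gfun D s γ.1 = s.2 ⟨γ.1, _⟩
          rw [gfun_eq, dif_pos (lt_of_lt_of_le γ.2 hα)]
        rw [heq]
        exact (hD T hT).1.2.2 s (hs T hT) α hα
      · push_neg at hα
        rcases Ordinal.zero_or_succ_or_isSuccLimit α with h0 | ⟨β, hβ⟩ | hlim
        · exact absurd (h0 ▸ hα) (not_lt_of_ge zero_le : ¬ s.1 < 0)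
        · have hβ' : α = β + 1 := by rw [← hβ, Ordinal.add_one_eq_succ]
          subst hβ'
          have hβκ : β < κ.ord := (lt_add_one β).trans h
          have hsβ : s.1 ≤ β := lt_add_one_le hα
          have hmem : ∀ T' ∈ D,
              (⟨β, fun δ => gfun D s δ.1⟩ : BNode.{u}) ∈ T' := by
            intro T' hT'
            exact IH β (lt_add_one β) hβκ T' hT'
          obtain ⟨b, hb⟩ := exists_step κ D hD hdir ⟨β, fun δ => gfun D s δ.1⟩ hmem
          have hspec : ∀ T' ∈ D,
              extOne ⟨β, fun δ => gfun D s δ.1⟩ (gfun D s β) ∈ T' := by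
            have hg : gfun D s β = Classical.epsilon fun b =>
                ∀ T' ∈ D, extOne ⟨β, fun δ => gfun D s δ.1⟩ b ∈ T' := by
              rw [gfun_eq, dif_neg (not_lt.2 hsβ)]
            rw [hg]
            exact Classical.epsilon_spec
              (p := fun b => ∀ T' ∈ D, extOne ⟨β, fun δ => gfun D s δ.1⟩ b ∈ T')
              ⟨b, hb⟩
          have hkey : brestrict κ (fun γ => gfun D s γ.1) (β + 1) h.le
              = extOne ⟨β, fun δ => gfun D s δ.1⟩ (gfun D s β) := by
            refine bnode_ext _ _ fun γ => ?_
            show gfun D s γ.1 = if h' : γ.1 < β then gfun D s γ.1 else gfun D s β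
            by_cases hγ : γ.1 < β
            · rw [dif_pos hγ]
            · rw [dif_neg hγ]
              have hγe : γ.1 = β := le_antisymm (lt_add_one_le γ.2) (not_lt.1 hγ)
              rw [hγe]
          rw [hkey]
          exact hspec T hT
        · refine (hD T hT).2.1 _ h hlim fun β hβ => ?_
          exact IH β hβ (hβ.trans h) T hT


end Stmt9
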